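/- For each fixed λ ∈ ℂ and k ≥ 1, let φ(t) = b_k(t) − λ·a_{k−1}(t), a monic polynomial of degree k with roots t^{(1)}, …, t^{(k)}. Then ∏_{j=1}^{k} a_{k−1}(t^{(j)}) = (−1)^{k(k−1)/2}. -/

import Mathlib

open Polynomial

noncomputable def aSeq : ℕ → Polynomial ℂ
  | 0 => 1
  | 1 => X - 1
  | (k + 2) => (X - 2) * aSeq (k + 1) - aSeq k

noncomputable def bSeq : ℕ → Polynomial ℂ
  | 0 => 1
  | 1 => X - 1
  | (k + 2) => (X - 1) * aSeq (k + 1) - aSeq k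

lemma aSeq_monic_deg : ∀ k, (aSeq k).Monic ∧ (aSeq k).natDegree = k := by
  intro k
  induction k using Nat.twoStepInduction with
  | zero =>
    constructor <;> simp [aSeq, monic_one]
  | one =>
    constructor
    · simpa [aSeq] using monic_X_sub_C (1 : ℂ)
    · show (X - C 1 : Polynomial ℂ).natDegree = 1
      exact natDegree_X_sub_C 1
  | more n ih1 ih2 =>
    obtain ⟨m1, d1⟩ := ih1
    obtain ⟨m2, d2⟩ := ih2
    have h2 : ((X : Polynomial ℂ) - 2) = X - C 2 := by rw [map_ofNat]
    have hXm : ((X : Polynomial ℂ) - 2).Monic := by rw [h2]; exact monic_X_sub_C 2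
    have hmul : (((X : Polynomial ℂ) - 2) * aSeq (n+1)).Monic := hXm.mul m2
    have hdeg : (((X : Polynomial ℂ) - 2) * aSeq (n+1)).natDegree = n + 2 := by
      rw [hXm.natDegree_mul m2, d2, h2, natDegree_X_sub_C]
      ring
    have hlt : (aSeq n).degree < (((X : Polynomial ℂ) - 2) * aSeq (n+1)).degree := by
      rw [degree_eq_natDegree hmul.ne_zero, hdeg]
      calc (aSeq n).degree ≤ (n : WithBot ℕ) := by
            simpa [d1] using degree_le_natDegree (p := aSeq n)
        _ < ((n+2 : ℕ) : WithBot ℕ) := by exact_mod_cast by omega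
    constructor
    · show (((X : Polynomial ℂ) - 2) * aSeq (n+1) - aSeq n).Monic
      have := hmul.add_of_left (q := -aSeq n) (by simpa using hlt)
      simpa [sub_eq_add_neg] using this
    · show (((X : Polynomial ℂ) - 2) * aSeq (n+1) - aSeq n).natDegree = n + 2
      rw [← hdeg]
      exact natDegree_sub_eq_left_of_natDegree_lt (by rw [hdeg, d1]; omega)

lemma bSeq_monic_deg (n : ℕ) : (bSeq (n+1)).Monic ∧ (bSeq (n+1)).natDegree = n+1 := by
  match n with
  | 0 =>
    constructor
    · simpa [bSeq] using monic_X_sub_C (1 : ℂ)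
    · show (X - C 1 : Polynomial ℂ).natDegree = 1
      exact natDegree_X_sub_C 1
  | n + 1 =>
    obtain ⟨m1, d1⟩ := aSeq_monic_deg n
    obtain ⟨m2, d2⟩ := aSeq_monic_deg (n+1)
    have h2 : ((X : Polynomial ℂ) - 1) = X - C 1 := by rw [map_one]
    have hXm : ((X : Polynomial ℂ) - 1).Monic := by rw [h2]; exact monic_X_sub_C 1
    have hmul : (((X : Polynomial ℂ) - 1) * aSeq (n+1)).Monic := hXm.mul m2
    have hdeg : (((X : Polynomial ℂ) - 1) * aSeq (n+1)).natDegree = n + 2 := by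
      rw [hXm.natDegree_mul m2, d2, h2, natDegree_X_sub_C]
      ring
    have hlt : (aSeq n).degree < (((X : Polynomial ℂ) - 1) * aSeq (n+1)).degree := by
      rw [degree_eq_natDegree hmul.ne_zero, hdeg]
      calc (aSeq n).degree ≤ (n : WithBot ℕ) := by
            simpa [d1] using degree_le_natDegree (p := aSeq n)
        _ < ((n+2 : ℕ) : WithBot ℕ) := by exact_mod_cast by omega
    constructor
    · show (((X : Polynomial ℂ) - 1) * aSeq (n+1) - aSeq n).Monic
      have := hmul.add_of_left (q := -aSeq n) (by simpa using hlt)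
      simpa [sub_eq_add_neg] using this
    · show (((X : Polynomial ℂ) - 1) * aSeq (n+1) - aSeq n).natDegree = n + 2
      rw [← hdeg]
      exact natDegree_sub_eq_left_of_natDegree_lt (by rw [hdeg, d1]; omega)

lemma card_roots_monic (p : Polynomial ℂ) : Multiset.card p.roots = p.natDegree :=
  (splits_iff_card_roots).mp (IsAlgClosed.splits p)

lemma eval_eq_prod_roots' (p : Polynomial ℂ) (hp : p.Monic) (x : ℂ) :
    p.eval x = ((p.roots).map fun a => x - a).prod := by
  conv_lhs => rw [← prod_multiset_X_sub_C_of_monic_of_roots_card_eq hp (card_roots_monic p)]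
  rw [eval_multiset_prod, Multiset.map_map]
  simp

lemma ms_comm (s t : Multiset ℂ) (f : ℂ → ℂ → ℂ) :
    (s.map fun a => (t.map (f a)).prod).prod
      = (t.map fun b => (s.map fun a => f a b).prod).prod := by
  induction s using Multiset.induction with
  | empty => simp
  | cons a s ih =>
    simp only [Multiset.map_cons, Multiset.prod_cons, ih, ← Multiset.prod_map_mul]

lemma ms_neg (m : Multiset ℂ) (f : ℂ → ℂ) :
    (m.map fun a => -f a).prod = (-1) ^ (Multiset.card m) * (m.map f).prod := by
  induction m using Multiset.induction with
  | empty => simp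
  | cons a s ih => simp [ih]; ring

lemma prod_swap (p q : Polynomial ℂ) (hp : p.Monic) (hq : q.Monic) :
    ((p.roots).map q.eval).prod
      = (-1) ^ (p.natDegree * q.natDegree) * ((q.roots).map p.eval).prod := by
  have h1 : ((p.roots).map q.eval).prod
      = ((p.roots).map fun r => ((q.roots).map fun s => r - s).prod).prod := by
    congr 1
    exact Multiset.map_congr rfl fun r _ => eval_eq_prod_roots' q hq r
  rw [h1, ms_comm]
  have h2 : ∀ s : ℂ, ((p.roots).map fun r => r - s).prod
      = (-1) ^ p.natDegree * p.eval s := by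
    intro s
    have : ((p.roots).map fun r => r - s).prod = ((p.roots).map fun r => -(s - r)).prod := by
      congr 1; exact Multiset.map_congr rfl fun r _ => by ring
    rw [this, ms_neg, card_roots_monic, eval_eq_prod_roots' p hp s]
  calc ((q.roots).map fun s => ((p.roots).map fun r => r - s).prod).prod
      = ((q.roots).map fun s => (-1) ^ p.natDegree * p.eval s).prod := by
        congr 1; exact Multiset.map_congr rfl fun s _ => h2 s
    _ = (-1) ^ (p.natDegree * q.natDegree) * ((q.roots).map p.eval).prod := by
        rw [Multiset.prod_map_mul, Multiset.map_const', Multiset.prod_replicate,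
          card_roots_monic, ← pow_mul]

lemma exp_step (m : ℕ) : m * (m - 1) / 2 + m = (m + 1) * m / 2 := by
  have h : (m + 1) * m / 2 = (m + 1).choose 2 := by
    rw [Nat.choose_two_right]; simp
  rw [h, Nat.choose_succ_succ, Nat.choose_one_right, Nat.choose_two_right, Nat.add_comm]

lemma R_val (m : ℕ) (hm : 1 ≤ m) :
    ((aSeq m).roots.map (aSeq (m - 1)).eval).prod = (-1 : ℂ) ^ (m * (m - 1) / 2) := by
  induction m, hm using Nat.le_induction with
  | base =>
    have h1 : aSeq 1 = X - C 1 := by simp [aSeq]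
    rw [h1, roots_X_sub_C]
    simp [aSeq]
  | succ m hm ih =>
    obtain ⟨n, rfl⟩ : ∃ n, m = n + 1 := ⟨m - 1, (Nat.succ_pred_eq_of_pos hm).symm⟩
    have ma1 := (aSeq_monic_deg (n + 2)).1
    have ma2 := (aSeq_monic_deg (n + 1)).1
    have d1 := (aSeq_monic_deg (n + 2)).2
    have d2 := (aSeq_monic_deg (n + 1)).2
    have hswap := prod_swap (aSeq (n + 2)) (aSeq (n + 1)) ma1 ma2
    have hsign : ((-1 : ℂ)) ^ ((aSeq (n+2)).natDegree * (aSeq (n+1)).natDegree) = 1 := by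
      rw [d1, d2]
      exact Even.neg_one_pow (by rw [Nat.mul_comm]; exact Nat.even_mul_succ_self (n+1))
    have hcongr : ((aSeq (n+1)).roots.map (aSeq (n+2)).eval)
        = ((aSeq (n+1)).roots.map fun s => -((aSeq n).eval s)) := by
      refine Multiset.map_congr rfl fun s hs => ?_
      have hz : (aSeq (n+1)).eval s = 0 := (mem_roots ma2.ne_zero).mp hs
      show (((X : Polynomial ℂ) - 2) * aSeq (n+1) - aSeq n).eval s = -((aSeq n).eval s)
      simp [hz]
    have hms := ms_neg ((aSeq (n+1)).roots) ((aSeq n).eval)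
    have hcard : Multiset.card (aSeq (n+1)).roots = n + 1 := by
      rw [card_roots_monic, d2]
    have ihx : ((aSeq (n+1)).roots.map (aSeq n).eval).prod
        = (-1 : ℂ) ^ ((n+1) * n / 2) := by simpa using ih
    have : ((aSeq (n+2)).roots.map (aSeq (n+2-1)).eval).prod
        = (-1 : ℂ) ^ (n + 1) * (-1 : ℂ) ^ ((n+1) * n / 2) := by
      show ((aSeq (n+2)).roots.map (aSeq (n+1)).eval).prod = _
      rw [hswap, hsign, one_mul, hcongr, hms, hcard, ihx]
    rw [this, ← pow_add]
    congr 1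
    have h := exp_step (n + 1)
    simp only [Nat.add_sub_cancel] at h ⊢
    omega

theorem prod_a_pred_over_roots_phi (k : ℕ) (hk : 1 ≤ k) (lam : ℂ) :
    (((bSeq k - Polynomial.C lam * aSeq (k - 1)).roots).map
        fun s => (aSeq (k - 1)).eval s).prod
      = (-1) ^ (k * (k - 1) / 2) := by
  obtain ⟨n, rfl⟩ : ∃ n, k = n + 1 := ⟨k - 1, (Nat.succ_pred_eq_of_pos hk).symm⟩
  match n with
  | 0 =>
    have h1 : bSeq 1 - C lam * aSeq 0 = X - C (1 + lam) := by
      simp [bSeq, aSeq, map_add]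
      ring
    rw [h1, roots_X_sub_C]
    simp [aSeq]
  | n + 1 =>
    set φ := bSeq (n+2) - C lam * aSeq (n+1) with hφdef
    obtain ⟨mb, db⟩ := bSeq_monic_deg (n + 1)
    have ma := (aSeq_monic_deg (n + 1)).1
    have da := (aSeq_monic_deg (n + 1)).2
    have hdlt : (C lam * aSeq (n+1)).degree < (bSeq (n+2)).degree := by
      calc (C lam * aSeq (n+1)).degree ≤ (C lam).degree + (aSeq (n+1)).degree := degree_mul_le _ _
        _ ≤ 0 + (aSeq (n+1)).degree := add_le_add_left degree_C_le _
        _ = (aSeq (n+1)).degree := zero_add _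
        _ ≤ ((n+1 : ℕ) : WithBot ℕ) := by simpa [da] using degree_le_natDegree (p := aSeq (n+1))
        _ < ((n+2 : ℕ) : WithBot ℕ) := by exact_mod_cast by omega
        _ = (bSeq (n+2)).degree := by rw [degree_eq_natDegree mb.ne_zero, db]
    have hφm : φ.Monic := by
      have := mb.add_of_left (q := -(C lam * aSeq (n+1))) (by simpa using hdlt)
      simpa [hφdef, sub_eq_add_neg] using this
    have hφd : φ.natDegree = n + 2 := by
      rw [hφdef]
      have hnd : (C lam * aSeq (n+1)).natDegree < (bSeq (n+2)).natDegree := by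
        rw [db]
        calc (C lam * aSeq (n+1)).natDegree ≤ (aSeq (n+1)).natDegree := natDegree_C_mul_le _ _
          _ < n + 2 := by omega
      rw [natDegree_sub_eq_left_of_natDegree_lt hnd, db]
    have hswap := prod_swap φ (aSeq (n+1)) hφm ma
    have hsign : ((-1 : ℂ)) ^ (φ.natDegree * (aSeq (n+1)).natDegree) = 1 := by
      rw [hφd, da]
      exact Even.neg_one_pow (by rw [Nat.mul_comm]; exact Nat.even_mul_succ_self (n+1))
    have hcongr : ((aSeq (n+1)).roots.map φ.eval)
        = ((aSeq (n+1)).roots.map fun s => -((aSeq n).eval s)) := by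
      refine Multiset.map_congr rfl fun s hs => ?_
      have hz : (aSeq (n+1)).eval s = 0 := (mem_roots ma.ne_zero).mp hs
      show ((((X : Polynomial ℂ) - 1) * aSeq (n+1) - aSeq n) - C lam * aSeq (n+1)).eval s
          = -((aSeq n).eval s)
      simp [hz]
    have hms := ms_neg ((aSeq (n+1)).roots) ((aSeq n).eval)
    have hcard : Multiset.card (aSeq (n+1)).roots = n + 1 := by
      rw [card_roots_monic, da]
    have hR : ((aSeq (n+1)).roots.map (aSeq n).eval).prod
        = (-1 : ℂ) ^ ((n+1) * n / 2) := by simpa using R_val (n+1) (by omega)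
    show (φ.roots.map fun s => (aSeq (n+1)).eval s).prod = _
    rw [show (fun s => (aSeq (n+1)).eval s) = (aSeq (n+1)).eval from rfl,
      hswap, hsign, one_mul, hcongr, hms, hcard, hR, ← pow_add]
    congr 1
    have h := exp_step (n + 1)
    simp only [Nat.add_sub_cancel] at h ⊢
    omega
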